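/- Under the assumptions of the preceding statement, assume additionally that Φ ∈ C²((0,∞)) with Φ'' bounded away from zero, i.e. Φ''(s) ≥ c > 0 for all s > 0. Then there is a constant C > 0 such that d(ρ,ρ₀) ≥ C‖ρ − ρ₀‖²_{L²(ℝ³)} for all ρ ∈ F_M. -/

import Mathlib

open MeasureTheory Filter Real
open scoped ENNReal Topology

noncomputable section

/-- Physical space `ℝ³`. -/
abbrev Space := EuclideanSpace ℝ (Fin 3)

/-- The induced Newtonian potential `V_ρ(x) = -∫ ρ(y)/|x-y| dy`. -/
def pot (ρ : Space → ℝ) (x : Space) : ℝ := - ∫ y, ρ y / ‖x - y‖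

/-- The potential energy `E_pot(ρ) = -(1/2)∫∫ ρ(x)ρ(y)/|x-y| dy dx`. -/
def Epot (ρ : Space → ℝ) : ℝ := - (1/2) * ∫ x, ∫ y, ρ x * ρ y / ‖x - y‖

/-- The reduced energy functional `H_r(ρ) = ∫ Φ(ρ) + E_pot(ρ)`. -/
def Hr (Φ : ℝ → ℝ) (ρ : Space → ℝ) : ℝ := (∫ x, Φ (ρ x)) + Epot ρ

/-- The constraint set `F_M`. -/
def FM (Φ : ℝ → ℝ) (M : ℝ) : Set (Space → ℝ) :=
  {ρ | Integrable ρ ∧ (∀ x, 0 ≤ ρ x) ∧ Integrable (fun x => Φ (ρ x)) ∧ (∫ x, ρ x) = M}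

/-- The standing assumptions on `Φ`: `Φ ∈ C¹([0,∞))`, `Φ(0) = Φ'(0) = 0`, together
with (Φ1) strict convexity, (Φ2) growth `Φ(s) ≥ C s^{1+1/n}` for large `s` with `0 < n < 3`,
and (Φ3) `Φ(s) ≤ C s^{1+1/n'}` for small `s` with `0 < n' < 3`. -/
structure PhiAssumptions (Φ : ℝ → ℝ) (n n' : ℝ) : Prop where
  smooth : ContDiffOn ℝ 1 Φ (Set.Ici 0)
  zero : Φ 0 = 0
  deriv_zero : derivWithin Φ (Set.Ici 0) 0 = 0
  strictConvex : StrictConvexOn ℝ (Set.Ici 0) Φ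
  n_pos : 0 < n
  n_lt_three : n < 3
  n'_pos : 0 < n'
  n'_lt_three : n' < 3
  growth_large : ∃ C > 0, ∃ s₁ > 0, ∀ s, s₁ ≤ s → C * s ^ (1 + 1/n) ≤ Φ s
  growth_small : ∃ C > 0, ∃ s₀ > 0, ∀ s, 0 ≤ s → s ≤ s₀ → Φ s ≤ C * s ^ (1 + 1/n')

/-- The total energy `H(ρ,u) = (1/2)∫|u|²ρ + ∫Φ(ρ) + E_pot(ρ)` of a state `(ρ,u)`. -/
def Htot (Φ : ℝ → ℝ) (ρ : Space → ℝ) (u : Space → Space) : ℝ :=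
  (1/2) * (∫ x, ‖u x‖^2 * ρ x) + (∫ x, Φ (ρ x)) + Epot ρ

/-- The distance functional
`d(ρ,ρ₀) = ∫ [Φ(ρ) − Φ(ρ₀) + (V_{ρ₀} − E₀)(ρ − ρ₀)]`. -/
def dFun (Φ : ℝ → ℝ) (E₀ : ℝ) (ρ₀ ρ : Space → ℝ) : ℝ :=
  ∫ x, (Φ (ρ x) - Φ (ρ₀ x) + (pot ρ₀ x - E₀) * (ρ x - ρ₀ x))

/-- The squared `L²` distance of the gradient fields, `‖∇V_ρ − ∇V_σ‖²_{L²}`. -/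
def grad2 (ρ σ : Space → ℝ) : ℝ :=
  ∫ x, ‖gradient (pot ρ) x - gradient (pot σ) x‖^2


section AuxLemmas

open Set Metric

/-- Taylor-type lower bound. -/
theorem taylorLB {Φ : ℝ → ℝ} {c : ℝ} (hc : 0 < c)
    (hsm : ContDiffOn ℝ 1 Φ (Set.Ici 0))
    (hΦ2 : ContDiffOn ℝ 2 Φ (Set.Ioi 0))
    (hΦ'' : ∀ s : ℝ, 0 < s → c ≤ derivWithin (derivWithin Φ (Set.Ioi 0)) (Set.Ioi 0) s)
    {a b : ℝ} (ha : 0 ≤ a) (hb : 0 ≤ b) :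
    Φ a + derivWithin Φ (Set.Ici 0) a * (b - a) + c/2 * (b - a)^2 ≤ Φ b := by
  set φ' := derivWithin Φ (Set.Ici 0) with hφ'
  have heq : ∀ x : ℝ, 0 < x → φ' x = deriv Φ x := fun x hx =>
    derivWithin_of_mem_nhds (Ici_mem_nhds hx)
  have hd1 : ∀ x : ℝ, 0 < x → DifferentiableAt ℝ Φ x := fun x hx =>
    (hΦ2.contDiffAt (Ioi_mem_nhds hx)).differentiableAt two_ne_zero
  have hder2 : ContDiffOn ℝ 1 (deriv Φ) (Set.Ioi 0) := by
    exact hΦ2.deriv_of_isOpen isOpen_Ioi (by norm_num)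
  have hd2 : ∀ x : ℝ, 0 < x → DifferentiableAt ℝ (deriv Φ) x := fun x hx =>
    (hder2.contDiffAt (Ioi_mem_nhds hx)).differentiableAt one_ne_zero
  have hcc : ∀ x : ℝ, 0 < x → c ≤ deriv (deriv Φ) x := by
    intro x hx
    have h1 : derivWithin (derivWithin Φ (Set.Ioi 0)) (Set.Ioi 0) x
        = derivWithin (deriv Φ) (Set.Ioi 0) x := by
      apply derivWithin_congr
      · intro y hy; exact derivWithin_of_isOpen isOpen_Ioi hy
      · exact derivWithin_of_isOpen isOpen_Ioi hx
    have h2 : derivWithin (deriv Φ) (Set.Ioi 0) x = deriv (deriv Φ) x :=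
      derivWithin_of_mem_nhds (Ioi_mem_nhds hx)
    have := hΦ'' x hx
    rw [h1, h2] at this; exact this
  -- slope bound for φ'
  have hcont : ContinuousOn φ' (Set.Ici 0) :=
    hsm.continuousOn_derivWithin (uniqueDiffOn_Ici 0) le_rfl
  have hS : ∀ x ∈ Set.Ici (0:ℝ), ∀ y ∈ Set.Ici (0:ℝ), x ≤ y → c * (y - x) ≤ φ' y - φ' x := by
    apply Convex.mul_sub_le_image_sub_of_le_deriv (convex_Ici 0) hcont
    · rw [interior_Ici]
      intro x hx
      exact (hd2 x hx).differentiableWithinAt.congr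
        (fun y hy => heq y hy) (heq x hx)
    · rw [interior_Ici]
      intro x hx
      have : φ' =ᶠ[𝓝 x] deriv Φ :=
        eventually_of_mem (Ioi_mem_nhds hx) (fun y hy => heq y hy)
      rw [this.deriv_eq]
      exact hcc x hx
  -- the comparison function
  set A := φ' a with hA
  set F : ℝ → ℝ := fun t => Φ t - A * t - c/2 * (t - a)^2 with hF
  have hFd : ∀ x : ℝ, 0 < x → HasDerivAt F (deriv Φ x - A - c * (x - a)) x := by
    intro x hx
    have h1 : HasDerivAt Φ (deriv Φ x) x := (hd1 x hx).hasDerivAt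
    have h2 : HasDerivAt (fun t : ℝ => A * t) A x := by
      simpa using (hasDerivAt_id x).const_mul A
    have h3 : HasDerivAt (fun t : ℝ => c/2 * (t - a)^2) (c/2 * (2 * (x - a))) x := by
      have := (((hasDerivAt_id x).sub_const a).pow 2).const_mul (c/2)
      simpa using this
    have := (h1.sub h2).sub h3
    exact this.congr_deriv (by ring)
  have hFc : ContinuousOn F (Set.Ici 0) := by
    apply (hsm.continuousOn.sub (by fun_prop)).sub (by fun_prop)
  have hgoal : F a ≤ F b := by
    rcases le_total a b with hab | hab
    · have := Convex.mul_sub_le_image_sub_of_le_deriv (convex_Ici a)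
        (hFc.mono (Set.Ici_subset_Ici.2 ha))
        (by
          rw [interior_Ici]
          intro x hx
          exact ((hFd x (lt_of_le_of_lt ha hx)).differentiableAt).differentiableWithinAt)
        (C := 0)
        (by
          rw [interior_Ici]
          intro x hx
          have hx0 : (0:ℝ) < x := lt_of_le_of_lt ha hx
          rw [(hFd x hx0).deriv]
          have := hS a ha x (le_of_lt hx0) (le_of_lt hx)
          have hx' := heq x hx0
          linarith)
        a Set.self_mem_Ici b hab hab
      linarith [this]
    · have := Convex.image_sub_le_mul_sub_of_deriv_le (convex_Icc b a)
        (hFc.mono (fun x hx => le_trans hb hx.1))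
        (by
          rw [interior_Icc]
          intro x hx
          exact ((hFd x (lt_of_le_of_lt hb hx.1)).differentiableAt).differentiableWithinAt)
        (C := 0)
        (by
          rw [interior_Icc]
          intro x hx
          have hx0 : (0:ℝ) < x := lt_of_le_of_lt hb hx.1
          rw [(hFd x hx0).deriv]
          have := hS x (le_of_lt hx0) a ha hx.2.le
          have hx' := heq x hx0
          linarith)
        b (Set.left_mem_Icc.2 hab) a (Set.right_mem_Icc.2 hab) hab
      simp only [zero_mul] at this
      linarith [this]
  simp only [hF] at hgoal
  nlinarith [hgoal]

theorem kernelFinite :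
    ∫⁻ z : Space, (Metric.ball (0:Space) 1).indicator
      (fun z => ENNReal.ofReal (‖z‖⁻¹) ^ 2) z < ∞ := by
  set B := volume (Metric.ball (0:Space) 1) with hB
  have hBfin : B < ∞ := measure_ball_lt_top
  set f : ℕ → Space → ℝ≥0∞ := fun n =>
    (Metric.ball (0:Space) ((2:ℝ)⁻¹^n)).indicator
      (fun _ => ENNReal.ofReal ((2:ℝ)^(n+1)) ^ 2) with hf
  have hpt : ∀ z : Space, (Metric.ball (0:Space) 1).indicator
      (fun z => ENNReal.ofReal (‖z‖⁻¹) ^ 2) z ≤ ∑' n, f n z := by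
    intro z
    by_cases hz : z ∈ Metric.ball (0:Space) 1
    swap
    · simp [Set.indicator_of_notMem hz]
    rw [Set.indicator_of_mem hz]
    by_cases hz0 : ‖z‖ = 0
    · simp [hz0]
    have hzpos : 0 < ‖z‖ := lt_of_le_of_ne (norm_nonneg z) (Ne.symm hz0)
    have hz1 : ‖z‖ < 1 := by simpa [Metric.mem_ball] using hz
    have hP : ∃ k : ℕ, ((2:ℝ)⁻¹)^(k+1) ≤ ‖z‖ := by
      obtain ⟨m, hm⟩ := exists_pow_lt_of_lt_one hzpos (by norm_num : (2:ℝ)⁻¹ < 1)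
      exact ⟨m, le_of_lt (lt_of_le_of_lt (pow_le_pow_of_le_one (by norm_num)
        (by norm_num) (Nat.le_succ m)) hm)⟩
    set n := Nat.find hP with hn
    have h1 : ((2:ℝ)⁻¹)^(n+1) ≤ ‖z‖ := Nat.find_spec hP
    have h2 : ‖z‖ < ((2:ℝ)⁻¹)^n := by
      rcases Nat.eq_zero_or_pos n with h | h
      · rw [h]; simpa using hz1
      · have := Nat.find_min hP (m := n - 1) (by omega)
        push_neg at this
        have : ¬ ((2:ℝ)⁻¹)^(n-1+1) ≤ ‖z‖ := Nat.find_min hP (by omega)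
        push_neg at this
        have hn1 : n - 1 + 1 = n := by omega
        rwa [hn1] at this
    refine le_trans ?_ (ENNReal.le_tsum n)
    have hzmem : z ∈ Metric.ball (0:Space) ((2:ℝ)⁻¹^n) := by
      simpa [Metric.mem_ball] using h2
    rw [hf]
    simp only [Set.indicator_of_mem hzmem]
    gcongr
    calc ‖z‖⁻¹ ≤ (((2:ℝ)⁻¹)^(n+1))⁻¹ := inv_anti₀ (by positivity) h1
      _ = (2:ℝ)^(n+1) := by rw [inv_pow, inv_inv]
  calc ∫⁻ z : Space, (Metric.ball (0:Space) 1).indicator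
        (fun z => ENNReal.ofReal (‖z‖⁻¹) ^ 2) z
      ≤ ∫⁻ z : Space, ∑' n, f n z := lintegral_mono hpt
    _ = ∑' n, ∫⁻ z : Space, f n z := by
        apply lintegral_tsum
        intro n
        exact (measurable_const.indicator measurableSet_ball).aemeasurable
    _ ≤ ∑' n : ℕ, (ENNReal.ofReal 4 * B) * (ENNReal.ofReal 2⁻¹)^n := by
        apply ENNReal.tsum_le_tsum
        intro n
        rw [hf]
        simp only []
        rw [lintegral_indicator measurableSet_ball, setLIntegral_const]
        have hvol : volume (Metric.ball (0:Space) ((2:ℝ)⁻¹^n))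
            = ENNReal.ofReal (((2:ℝ)⁻¹^n)^(3:ℕ)) * B := by
          rw [hB, Measure.addHaar_ball volume (0:Space) (by positivity)]
          congr 2
          simp [finrank_euclideanSpace_fin]
        rw [hvol]
        have harith : (ENNReal.ofReal ((2:ℝ)^(n+1)))^2 * ENNReal.ofReal (((2:ℝ)⁻¹^n)^(3:ℕ))
            = ENNReal.ofReal 4 * (ENNReal.ofReal 2⁻¹)^n := by
          rw [← ENNReal.ofReal_pow (by positivity), ← ENNReal.ofReal_pow (by norm_num),
            ← ENNReal.ofReal_mul (by positivity), ← ENNReal.ofReal_mul (by norm_num)]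
          congr 1
          rw [inv_pow, inv_pow]
          rw [← pow_mul, ← pow_mul, ← div_eq_mul_inv, ← div_eq_mul_inv,
            div_eq_div_iff (by positivity) (by positivity),
            ← pow_add, show (4:ℝ) = 2^2 by norm_num, ← pow_add]
          congr 1
          ring
        rw [← mul_assoc, harith]
        exact le_of_eq (by ring)
    _ < ∞ := by
        rw [ENNReal.tsum_mul_left, ENNReal.tsum_geometric]
        refine ENNReal.mul_lt_top (ENNReal.mul_lt_top ENNReal.ofReal_lt_top hBfin) ?_
        rw [lt_top_iff_ne_top]
        apply ENNReal.inv_ne_top.2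
        simp only [ne_eq, tsub_eq_zero_iff_le, not_le]
        exact ENNReal.ofReal_lt_one.2 (by norm_num)

theorem pot_aesm {ρ₀ : Space → ℝ} (h : AEStronglyMeasurable ρ₀ (volume : Measure Space)) :
    AEStronglyMeasurable (pot ρ₀) (volume : Measure Space) := by
  have h2 : AEStronglyMeasurable (fun p : Space × Space => ‖p.1 - p.2‖⁻¹)
      ((volume : Measure Space).prod (volume : Measure Space)) :=
    (((continuous_fst.sub continuous_snd).norm).measurable.inv).aestronglyMeasurable
  have h1 : AEStronglyMeasurable (fun p : Space × Space => ρ₀ p.2 * ‖p.1 - p.2‖⁻¹)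
      ((volume : Measure Space).prod (volume : Measure Space)) :=
    (h.comp_quasiMeasurePreserving Measure.quasiMeasurePreserving_snd).mul h2
  have h3 := h1.integral_prod_right'
  have h4 : pot ρ₀ = fun x => - ∫ y, ρ₀ y * ‖x - y‖⁻¹ := by
    unfold pot
    simp only [div_eq_mul_inv]
  rw [h4]
  exact h3.neg

theorem pot_mul_integrable {ρ₀ w : Space → ℝ} (h0 : Integrable ρ₀ (volume : Measure Space))
    (h0n : ∀ x, 0 ≤ ρ₀ x)
    (hw : Integrable w (volume : Measure Space))
    (hw2 : Integrable (fun x => w x ^ 2) (volume : Measure Space)) :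
    Integrable (fun x => pot ρ₀ x * w x) (volume : Measure Space) := by
  set K : Space → ℝ≥0∞ := fun z => ENNReal.ofReal ‖z‖⁻¹ with hK
  set P : Space → ℝ≥0∞ := fun y => ENNReal.ofReal (ρ₀ y) with hP
  set W : Space → ℝ≥0∞ := fun x => ENNReal.ofReal ‖w x‖ with hW
  set k1h : Space → ℝ≥0∞ := fun z => (Metric.ball (0:Space) 1).indicator
      (fun z => ENNReal.ofReal ‖z‖⁻¹) z with hk1h
  -- measurability facts
  have hKm : Measurable K := by
    apply Measurable.ennreal_ofReal
    exact continuous_norm.measurable.inv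
  have hk1hm : Measurable k1h := (hKm.indicator measurableSet_ball)
  have hWm : AEMeasurable W (volume : Measure Space) := by
    apply AEMeasurable.ennreal_ofReal
    exact hw.1.norm.aemeasurable
  have hPm : AEMeasurable P (volume : Measure Space) := h0.1.aemeasurable.ennreal_ofReal
  -- finiteness facts
  have hWfin : ∀ x, W x ≠ ∞ := fun x => ENNReal.ofReal_ne_top
  have hPfin : ∀ y, P y ≠ ∞ := fun y => ENNReal.ofReal_ne_top
  have hIW : ∫⁻ x, W x ∂(volume : Measure Space) < ∞ := by
    have := hw.2
    rw [hasFiniteIntegral_iff_norm] at this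
    exact this
  have hIW2 : ∫⁻ x, (W x) ^ (2:ℝ) ∂(volume : Measure Space) < ∞ := by
    have := hw2.2
    rw [hasFiniteIntegral_iff_norm] at this
    have heq : ∀ x, (W x) ^ (2:ℝ) = ENNReal.ofReal ‖w x ^ 2‖ := by
      intro x
      rw [hW]
      rw [ENNReal.rpow_two, ← ENNReal.ofReal_pow (norm_nonneg _)]
      congr 1
      rw [Real.norm_eq_abs, Real.norm_eq_abs, ← abs_pow, abs_of_nonneg (sq_nonneg _)]
    simp only [heq]
    exact this
  have hIP : ∫⁻ y, P y ∂(volume : Measure Space) < ∞ := by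
    have := h0.2
    rw [hasFiniteIntegral_iff_norm] at this
    have heq : ∀ y, P y = ENNReal.ofReal ‖ρ₀ y‖ := by
      intro y
      rw [hP, Real.norm_eq_abs, abs_of_nonneg (h0n y)]
    simp only [heq]
    exact this
  have hk1 : ∫⁻ z, (k1h z) ^ (2:ℝ) ∂(volume : Measure Space) < ∞ := by
    have heq : ∀ z, (k1h z) ^ (2:ℝ) = (Metric.ball (0:Space) 1).indicator
        (fun z => ENNReal.ofReal (‖z‖⁻¹) ^ 2) z := by
      intro z
      rw [hk1h]
      by_cases hz : z ∈ Metric.ball (0:Space) 1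
      · simp [Set.indicator_of_mem hz, ENNReal.rpow_two]
      · simp [Set.indicator_of_notMem hz, ENNReal.rpow_two]
    simp only [heq]
    exact kernelFinite
  -- A: uniform bound for the inner integral
  set A : ℝ≥0∞ := (∫⁻ z, (k1h z) ^ (2:ℝ) ∂(volume : Measure Space)) ^ (1/(2:ℝ))
      * (∫⁻ x, (W x) ^ (2:ℝ) ∂(volume : Measure Space)) ^ (1/(2:ℝ))
      + ∫⁻ x, W x ∂(volume : Measure Space) with hA
  have hAfin : A < ∞ := by
    rw [hA]
    apply ENNReal.add_lt_top.2
    constructor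
    · exact ENNReal.mul_lt_top
        (ENNReal.rpow_lt_top_of_nonneg (by norm_num) hk1.ne)
        (ENNReal.rpow_lt_top_of_nonneg (by norm_num) hIW2.ne)
    · exact hIW
  have hKsplit : ∀ z : Space, K z ≤ k1h z + 1 := by
    intro z
    by_cases hz : z ∈ Metric.ball (0:Space) 1
    · rw [hk1h]; simp only [Set.indicator_of_mem hz]; exact le_self_add
    · rw [hk1h]; simp only [Set.indicator_of_notMem hz]
      rw [hK]
      have hz1 : (1:ℝ) ≤ ‖z‖ := by
        simpa [Metric.mem_ball] using hz
      rw [zero_add]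
      calc ENNReal.ofReal ‖z‖⁻¹ ≤ ENNReal.ofReal 1 := by
            apply ENNReal.ofReal_le_ofReal
            rw [← inv_one]
            exact inv_anti₀ (by norm_num) hz1
        _ = 1 := ENNReal.ofReal_one
  have hinner : ∀ y : Space, ∫⁻ x, K (x - y) * W x ∂(volume : Measure Space) ≤ A := by
    intro y
    have step1 : ∫⁻ x, K (x - y) * W x ∂(volume : Measure Space)
        ≤ ∫⁻ x, (k1h (x - y) * W x + W x) ∂(volume : Measure Space) := by
      apply lintegral_mono
      intro x
      calc K (x - y) * W x ≤ (k1h (x - y) + 1) * W x := by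
            exact mul_le_mul_left (hKsplit (x - y)) _
        _ = k1h (x - y) * W x + W x := by rw [add_mul, one_mul]
    have step2 : ∫⁻ x, (k1h (x - y) * W x + W x) ∂(volume : Measure Space)
        = (∫⁻ x, k1h (x - y) * W x ∂(volume : Measure Space))
          + ∫⁻ x, W x ∂(volume : Measure Space) := by
      apply lintegral_add_left'
      exact ((hk1hm.comp (measurable_id.sub_const y)).aemeasurable.mul hWm)
    have step3 : ∫⁻ x, k1h (x - y) * W x ∂(volume : Measure Space)
        ≤ (∫⁻ x, (k1h (x - y)) ^ (2:ℝ) ∂(volume : Measure Space)) ^ (1/(2:ℝ))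
          * (∫⁻ x, (W x) ^ (2:ℝ) ∂(volume : Measure Space)) ^ (1/(2:ℝ)) := by
      have hconj : Real.HolderConjugate 2 2 := Real.HolderConjugate.two_two
      exact ENNReal.lintegral_mul_le_Lp_mul_Lq (volume : Measure Space) hconj
        (hk1hm.comp (measurable_id.sub_const y)).aemeasurable hWm
    have step4 : ∫⁻ x, (k1h (x - y)) ^ (2:ℝ) ∂(volume : Measure Space)
        = ∫⁻ z, (k1h z) ^ (2:ℝ) ∂(volume : Measure Space) := by
      exact (measurePreserving_sub_right (volume : Measure Space) y).lintegral_comp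
        (hk1hm.pow_const _)
    rw [hA]
    calc ∫⁻ x, K (x - y) * W x ∂(volume : Measure Space)
        ≤ (∫⁻ x, k1h (x - y) * W x ∂(volume : Measure Space))
          + ∫⁻ x, W x ∂(volume : Measure Space) := by rw [← step2]; exact step1
      _ ≤ (∫⁻ z, (k1h z) ^ (2:ℝ) ∂(volume : Measure Space)) ^ (1/(2:ℝ))
          * (∫⁻ x, (W x) ^ (2:ℝ) ∂(volume : Measure Space)) ^ (1/(2:ℝ))
          + ∫⁻ x, W x ∂(volume : Measure Space) := by
          apply add_le_add_left
          rw [← step4]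
          exact step3
  -- pointwise bound for the ennnorm of pot
  have hVbd : ∀ x : Space, (‖pot ρ₀ x‖₊ : ℝ≥0∞) ≤ ∫⁻ y, P y * K (x - y) ∂(volume : Measure Space) := by
    intro x
    rw [pot, nnnorm_neg]
    refine le_trans (enorm_integral_le_lintegral_enorm _) (le_of_eq ?_)
    apply lintegral_congr
    intro y
    rw [Real.enorm_eq_ofReal_abs, abs_div, abs_of_nonneg (h0n y), abs_norm,
      div_eq_mul_inv, ENNReal.ofReal_mul (h0n y)]
  constructor
  · exact (pot_aesm h0.1).mul hw.1
  · rw [hasFiniteIntegral_iff_norm]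
    have hbd : ∀ x : Space, ENNReal.ofReal ‖pot ρ₀ x * w x‖
        ≤ (∫⁻ y, P y * K (x - y) ∂(volume : Measure Space)) * W x := by
      intro x
      rw [norm_mul, ENNReal.ofReal_mul (norm_nonneg _)]
      apply mul_le_mul'
      · rw [ofReal_norm_eq_enorm]
        exact hVbd x
      · rw [hW]
    calc ∫⁻ x, ENNReal.ofReal ‖pot ρ₀ x * w x‖ ∂(volume : Measure Space)
        ≤ ∫⁻ x, (∫⁻ y, P y * K (x - y) ∂(volume : Measure Space)) * W x ∂(volume : Measure Space) :=
          lintegral_mono hbd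
      _ = ∫⁻ x, ∫⁻ y, P y * K (x - y) * W x ∂(volume : Measure Space) ∂(volume : Measure Space) := by
          apply lintegral_congr
          intro x
          rw [← lintegral_mul_const' (W x) _ (hWfin x)]
      _ = ∫⁻ y, ∫⁻ x, P y * K (x - y) * W x ∂(volume : Measure Space) ∂(volume : Measure Space) := by
          apply lintegral_lintegral_swap
          show AEMeasurable (fun p : Space × Space => P p.2 * K (p.1 - p.2) * W p.1) _
          refine AEMeasurable.mul (f := fun p : Space × Space => P p.2 * K (p.1 - p.2)) (g := fun p => W p.1) ?_ ?_
          refine AEMeasurable.mul (f := fun p : Space × Space => P p.2) (g := fun p => K (p.1 - p.2)) ?_ ?_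
          · exact hPm.comp_quasiMeasurePreserving Measure.quasiMeasurePreserving_snd
          · exact (hKm.comp ((measurable_fst.sub measurable_snd))).aemeasurable
          · exact hWm.comp_quasiMeasurePreserving Measure.quasiMeasurePreserving_fst
      _ = ∫⁻ y, P y * ∫⁻ x, K (x - y) * W x ∂(volume : Measure Space) ∂(volume : Measure Space) := by
          apply lintegral_congr
          intro y
          rw [← lintegral_const_mul' (P y) _ (hPfin y)]
          apply lintegral_congr
          intro x
          rw [mul_assoc]
      _ ≤ ∫⁻ y, P y * A ∂(volume : Measure Space) := by
          apply lintegral_mono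
          intro y
          exact mul_le_mul_right (hinner y) _
      _ = (∫⁻ y, P y ∂(volume : Measure Space)) * A :=
          lintegral_mul_const' A _ hAfin.ne
      _ < ∞ := ENNReal.mul_lt_top hIP hAfin

theorem l2norm_sq {w : Space → ℝ} (hm : AEStronglyMeasurable w (volume : Measure Space)) :
    ((eLpNorm w 2 volume).toReal)^2 = ∫ x, w x ^ 2 := by
  have hint : ∀ x : Space, (‖w x‖₊ : ℝ≥0∞) ^ (2:ℝ) = ENNReal.ofReal (w x ^ 2) := by
    intro x
    rw [show ((‖w x‖₊ : ℝ≥0∞)) = ENNReal.ofReal ‖w x‖ from (ofReal_norm_eq_enorm _).symm, ENNReal.rpow_two, ← ENNReal.ofReal_pow (norm_nonneg _)]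
    congr 1
    rw [Real.norm_eq_abs, ← abs_pow, abs_of_nonneg (sq_nonneg _)]
  have h1 : ∫ x, w x ^ 2 = (∫⁻ x, ENNReal.ofReal (w x ^ 2)).toReal :=
    integral_eq_lintegral_of_nonneg_ae (ae_of_all _ fun x => sq_nonneg (w x))
      ((hm.aemeasurable.pow_const 2).aestronglyMeasurable)
  have h2' : ∫⁻ x, ENNReal.ofReal (w x ^ 2) = ∫⁻ x, ‖w x‖ₑ ^ (2:ℝ) :=
    lintegral_congr fun x => (hint x).symm
  rw [eLpNorm_eq_lintegral_rpow_enorm_toReal two_ne_zero ENNReal.ofNat_ne_top, h1, h2']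
  set T := ∫⁻ x, ‖w x‖ₑ ^ (2:ℝ) with hTdef
  simp only [ENNReal.toReal_ofNat]
  rw [← ENNReal.toReal_rpow, ← Real.rpow_natCast (T.toReal ^ (1/2:ℝ)) 2,
    ← Real.rpow_mul ENNReal.toReal_nonneg]
  norm_num

end AuxLemmas

/-- under the assumptions of the preceding statement, if moreover
`Φ ∈ C²((0,∞))` with `Φ'' ≥ c > 0`, then `d(ρ,ρ₀) ≥ C‖ρ − ρ₀‖²_{L²}` for all `ρ ∈ F_M`. -/
theorem statement14 (Φ : ℝ → ℝ) (n n' : ℝ) (hΦ : PhiAssumptions Φ n n')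
    (M : ℝ) (hM : 0 < M) (ρ₀ : Space → ℝ) (h0 : ρ₀ ∈ FM Φ M)
    (hmin : ∀ ρ ∈ FM Φ M, Hr Φ ρ₀ ≤ Hr Φ ρ)
    (E₀ : ℝ) (hE₀ : E₀ ≤ 0)
    (hEL : ∀ x : Space,
      (pot ρ₀ x < E₀ → derivWithin Φ (Set.Ici 0) (ρ₀ x) = E₀ - pot ρ₀ x) ∧
      (E₀ ≤ pot ρ₀ x → ρ₀ x = 0))
    (hΦ2 : ContDiffOn ℝ 2 Φ (Set.Ioi 0))
    (c : ℝ) (hc : 0 < c)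
    (hΦ'' : ∀ s : ℝ, 0 < s → c ≤ derivWithin (derivWithin Φ (Set.Ioi 0)) (Set.Ioi 0) s) :
    ∃ C > 0, ∀ ρ ∈ FM Φ M,
      C * ((eLpNorm (fun x => ρ x - ρ₀ x) 2 volume).toReal)^2 ≤ dFun Φ E₀ ρ₀ ρ := by
  obtain ⟨h0i, h0n, h0Φ, h0M⟩ := h0
  have key : ∀ a b : ℝ, 0 ≤ a → 0 ≤ b →
      Φ a + derivWithin Φ (Set.Ici 0) a * (b - a) + c/2 * (b - a)^2 ≤ Φ b :=
    fun a b ha hb => taylorLB hc hΦ.smooth hΦ2 hΦ'' ha hb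
  have hΦlb : ∀ b : ℝ, 0 ≤ b → c/2 * b^2 ≤ Φ b := by
    intro b hb
    have := key 0 b le_rfl hb
    rw [hΦ.zero, hΦ.deriv_zero] at this
    simpa using this
  have sqInt : ∀ σ : Space → ℝ, Integrable σ → (∀ x, 0 ≤ σ x) →
      Integrable (fun x => Φ (σ x)) → Integrable (fun x => σ x ^ 2) := by
    intro σ hi hn hΦi
    apply Integrable.mono' (hΦi.const_mul (2/c))
    · exact (hi.1.aemeasurable.pow_const 2).aestronglyMeasurable
    · apply ae_of_all
      intro x
      have h1 := hΦlb (σ x) (hn x)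
      have h2 : ‖σ x ^ 2‖ = σ x ^ 2 := by
        rw [Real.norm_eq_abs, abs_of_nonneg (sq_nonneg _)]
      rw [h2]
      rw [div_mul_eq_mul_div, le_div_iff₀ hc] at *
      nlinarith
  refine ⟨c/2, by positivity, ?_⟩
  intro ρ hρ
  obtain ⟨hi, hn, hΦi, hM'⟩ := hρ
  set w : Space → ℝ := fun x => ρ x - ρ₀ x with hwdef
  have hwi : Integrable w := hi.sub h0i
  have hw2 : Integrable (fun x => w x ^ 2) := by
    have h1 := sqInt ρ hi hn hΦi
    have h2 := sqInt ρ₀ h0i h0n h0Φ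
    apply Integrable.mono' ((h1.add h2).const_mul 2)
    · exact (hwi.1.aemeasurable.pow_const 2).aestronglyMeasurable
    · apply ae_of_all
      intro x
      have h3 : ‖w x ^ 2‖ = w x ^ 2 := by
        rw [Real.norm_eq_abs, abs_of_nonneg (sq_nonneg _)]
      rw [h3, hwdef]
      simp only [Pi.add_apply]
      nlinarith [sq_nonneg (ρ x + ρ₀ x)]
  have hVw : Integrable (fun x => pot ρ₀ x * w x) := pot_mul_integrable h0i h0n hwi hw2
  set g : Space → ℝ := fun x => Φ (ρ x) - Φ (ρ₀ x) + (pot ρ₀ x - E₀) * (ρ x - ρ₀ x) with hgdef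
  have hgi : Integrable g := by
    have hgeq : g = fun x => ((Φ (ρ x) - Φ (ρ₀ x) - E₀ * w x) + pot ρ₀ x * w x) := by
      funext x
      rw [hgdef, hwdef]
      ring
    rw [hgeq]
    exact ((hΦi.sub h0Φ).sub (hwi.const_mul E₀)).add hVw
  have hhi : Integrable (fun x => c/2 * w x ^ 2) := hw2.const_mul _
  have hpt : ∀ x, c/2 * w x ^ 2 ≤ g x := by
    intro x
    rcases lt_or_ge (pot ρ₀ x) E₀ with hV | hV
    · have hEL1 := (hEL x).1 hV
      have hkey := key (ρ₀ x) (ρ x) (h0n x) (hn x)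
      rw [hEL1] at hkey
      simp only [hgdef, hwdef]
      nlinarith
    · have h00 := (hEL x).2 hV
      have hkey := hΦlb (ρ x) (hn x)
      have hVE : 0 ≤ pot ρ₀ x - E₀ := by linarith
      simp only [hgdef, hwdef, h00, hΦ.zero]
      nlinarith [mul_nonneg hVE (hn x)]
  have hmono : ∫ x, c/2 * w x ^ 2 ≤ ∫ x, g x := integral_mono hhi hgi hpt
  have hL2 : ((eLpNorm w 2 volume).toReal)^2 = ∫ x, w x ^ 2 := l2norm_sq hwi.1
  have hdfun : dFun Φ E₀ ρ₀ ρ = ∫ x, g x := rfl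
  calc c/2 * ((eLpNorm (fun x => ρ x - ρ₀ x) 2 volume).toReal)^2
      = c/2 * ∫ x, w x ^ 2 := by rw [← hL2]
    _ = ∫ x, c/2 * w x ^ 2 := (integral_const_mul _ _).symm
    _ ≤ ∫ x, g x := hmono
    _ = dFun Φ E₀ ρ₀ ρ := hdfun.symm
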